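/- Let X₁, …, X_n be normed spaces, (Y,d) a metric space, a = (a₁, …, a_n) ∈ X₁ × ⋯ × X_n, and let p₁, p₂, q₁, q₂ satisfy condition (★) with p₁ < p₂, and set α = q₂p₁/(q₁p₂). Every arbitrary map f : X₁ × ⋯ × X_n → Y which is ((q₁,1),p₁)-semi-integral at a is ((q₂,α),p₂)-semi-integral at a. -/

import Mathlib

open scoped BigOperators

private lemma aux_sum_rpow_le {ι : Type*} (s : Finset ι) (g : ι → ℝ)
    (hg : ∀ i ∈ s, 0 ≤ g i) {r : ℝ} (hr : 1 ≤ r) :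
    ∑ i ∈ s, g i ^ r ≤ (∑ i ∈ s, g i) ^ r := by
  have hs : 0 ≤ ∑ i ∈ s, g i := Finset.sum_nonneg hg
  have key : ∀ i ∈ s, g i ^ r ≤ (∑ i ∈ s, g i) ^ (r - 1) * g i := by
    intro i hi
    have h1 : g i ^ r = g i ^ (r - 1) * g i := by
      rw [show r = (r-1) + 1 by ring, Real.rpow_add_of_nonneg (hg i hi) (by linarith) zero_le_one]
      rw [Real.rpow_one]
      ring_nf
    rw [h1]
    exact mul_le_mul_of_nonneg_right
      (Real.rpow_le_rpow (hg i hi) (Finset.single_le_sum hg hi) (by linarith)) (hg i hi)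
  calc ∑ i ∈ s, g i ^ r ≤ ∑ i ∈ s, (∑ i ∈ s, g i) ^ (r - 1) * g i := Finset.sum_le_sum key
    _ = (∑ i ∈ s, g i) ^ (r-1) * ∑ i ∈ s, g i := by rw [← Finset.mul_sum]
    _ = (∑ i ∈ s, g i) ^ r := by
        rw [show r = (r-1)+1 by ring, Real.rpow_add_of_nonneg hs (by linarith) zero_le_one,
          Real.rpow_one]
        ring_nf

/-- An arbitrary map `f : X₁ × ⋯ × X_n → Y` from a product of normed spaces to a metric
space is `((q,α),p)`-semi-integral at `a = (a₁,…,aₙ)` if there is `C ≥ 0` with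
`(∑ⱼ d(f(a+xⱼ), f(a))^q)^{1/α} ≤ C ⋅ sup_{φᵢ∈B_{Xᵢ*}} ∑ⱼ |φ₁(xⱼ¹)⋯φₙ(xⱼⁿ)|^p`
for all finite families. -/
def MapSemiIntegralAt {𝕜 : Type*} [RCLike 𝕜] {n : ℕ} {X : Fin n → Type*}
    [∀ i, NormedAddCommGroup (X i)] [∀ i, NormedSpace 𝕜 (X i)]
    {Y : Type*} [MetricSpace Y]
    (q α p : ℝ) (f : (∀ i, X i) → Y) (a : ∀ i, X i) : Prop :=
  ∃ C : ℝ, 0 ≤ C ∧ ∀ (m : ℕ) (x : Fin m → ∀ i, X i),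
    (∑ j, dist (f (a + x j)) (f a) ^ q) ^ (1 / α) ≤
      C * ⨆ φ : ∀ i, {φ : X i →L[𝕜] 𝕜 // ‖φ‖ ≤ 1},
        ∑ j, (∏ i, ‖(φ i).1 (x j i)‖) ^ p

set_option maxHeartbeats 1000000 in
/-- If `p₁, p₂, q₁, q₂` satisfy condition (★) with `p₁ < p₂` and
`α = q₂p₁/(q₁p₂)`, then every arbitrary map `f : X₁ × ⋯ × X_n → Y` which is
`((q₁,1),p₁)`-semi-integral at `a` is `((q₂,α),p₂)`-semi-integral at `a`. -/
theorem stmt8 {𝕜 : Type*} [RCLike 𝕜] {n : ℕ} {X : Fin n → Type*}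
    [∀ i, NormedAddCommGroup (X i)] [∀ i, NormedSpace 𝕜 (X i)]
    {Y : Type*} [MetricSpace Y]
    (p₁ p₂ q₁ q₂ : ℝ)
    (hp₁ : 1 ≤ p₁) (hp₁₂ : p₁ ≤ p₂) (hq₁ : 1 ≤ q₁) (hq₁₂ : q₁ ≤ q₂)
    (hpq₁ : p₁ ≤ q₁) (hpq₂ : p₂ ≤ q₂)
    (hstar : 1 / p₁ - 1 / q₁ ≤ 1 / p₂ - 1 / q₂)
    (hlt : p₁ < p₂)
    (f : (∀ i, X i) → Y) (a : ∀ i, X i)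
    (hf : MapSemiIntegralAt (𝕜 := 𝕜) q₁ 1 p₁ f a) :
    MapSemiIntegralAt (𝕜 := 𝕜) q₂ (q₂ * p₁ / (q₁ * p₂)) p₂ f a := by
  classical
  obtain ⟨C, hC0, hC⟩ := hf
  have hp₁0 : (0:ℝ) < p₁ := by linarith
  have hp₂0 : (0:ℝ) < p₂ := by linarith
  have hq₁0 : (0:ℝ) < q₁ := by linarith
  have hq₂0 : (0:ℝ) < q₂ := by linarith
  have hq12 : q₁ < q₂ := by
    have h1 : 1 / p₂ < 1 / p₁ := one_div_lt_one_div_of_lt hp₁0 hlt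
    have h2 : 1 / q₂ < 1 / q₁ := by linarith
    exact (one_div_lt_one_div hq₂0 hq₁0).mp h2
  -- key consequence of (★): p₂ q₁ ≤ p₁ q₂
  have hkey : p₂ * q₁ ≤ p₁ * q₂ := by
    rw [div_sub_div _ _ (ne_of_gt hp₁0) (ne_of_gt hq₁0),
      div_sub_div _ _ (ne_of_gt hp₂0) (ne_of_gt hq₂0),
      div_le_div_iff₀ (by positivity) (by positivity)] at hstar
    have h3 : p₁ * (p₂ - p₁) ≤ q₁ * (p₂ - p₁) :=
      mul_le_mul_of_nonneg_right hpq₁ (by linarith)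
    have h4 : q₂ * (p₁ * (p₂ - p₁)) ≤ q₂ * (q₁ * (p₂ - p₁)) :=
      mul_le_mul_of_nonneg_left h3 hq₂0.le
    have h5 : 0 ≤ p₁ * (p₁ * q₂ - p₂ * q₁) := by nlinarith
    nlinarith [mul_pos hp₁0 hp₂0]
  haveI : Nonempty (∀ i, {φ : X i →L[𝕜] 𝕜 // ‖φ‖ ≤ 1}) :=
    ⟨fun i => ⟨0, by simp⟩⟩
  refine ⟨C ^ (p₂ / p₁), Real.rpow_nonneg hC0 _, fun m x => ?_⟩
  set D : Fin m → ℝ := fun j => dist (f (a + x j)) (f a) with hD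
  set P : (∀ i, {φ : X i →L[𝕜] 𝕜 // ‖φ‖ ≤ 1}) → Fin m → ℝ :=
    fun φ j => ∏ i, ‖(φ i).1 (x j i)‖ with hP
  have hD0 : ∀ j, 0 ≤ D j := fun j => dist_nonneg
  have hP0 : ∀ φ j, 0 ≤ P φ j := fun φ j => Finset.prod_nonneg fun i _ => norm_nonneg _
  set M : Fin m → ℝ := fun j => ∏ i, ‖x j i‖ with hM
  have hM0 : ∀ j, 0 ≤ M j := fun j => Finset.prod_nonneg fun i _ => norm_nonneg _
  have hPM : ∀ φ j, P φ j ≤ M j := by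
    intro φ j
    refine Finset.prod_le_prod (fun i _ => norm_nonneg _) (fun i _ => ?_)
    calc ‖(φ i).1 (x j i)‖ ≤ ‖(φ i).1‖ * ‖x j i‖ := (φ i).1.le_opNorm _
      _ ≤ 1 * ‖x j i‖ := mul_le_mul_of_nonneg_right (φ i).2 (norm_nonneg _)
      _ = ‖x j i‖ := one_mul _
  -- Step 1: natural number weights via repetition
  have step1 : ∀ k : Fin m → ℕ,
      ∑ j, (k j : ℝ) * D j ^ q₁ ≤
        C * ⨆ φ : ∀ i, {φ : X i →L[𝕜] 𝕜 // ‖φ‖ ≤ 1}, ∑ j, (k j : ℝ) * P φ j ^ p₁ := by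
    intro k
    have ecard : Fintype.card ((j : Fin m) × Fin (k j)) = ∑ j, k j := by
      simp [Fintype.card_sigma]
    let e : ((j : Fin m) × Fin (k j)) ≃ Fin (∑ j, k j) := Fintype.equivFinOfCardEq ecard
    have hsum : ∀ (g : Fin m → ℝ), ∑ l, g (e.symm l).1 = ∑ j, (k j : ℝ) * g j := by
      intro g
      calc ∑ l, g (e.symm l).1
          = ∑ σ : (j : Fin m) × Fin (k j), g σ.1 := Equiv.sum_comp e.symm (fun σ => g σ.1)
        _ = ∑ j, ∑ _c : Fin (k j), g j := by
            rw [← Finset.univ_sigma_univ, Finset.sum_sigma]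
        _ = ∑ j, (k j : ℝ) * g j := by
            simp [Finset.sum_const, nsmul_eq_mul]
    have h := hC (∑ j, k j) (fun l => x (e.symm l).1)
    rw [show (1:ℝ)/1 = 1 by norm_num, Real.rpow_one] at h
    calc ∑ j, (k j : ℝ) * D j ^ q₁
        = ∑ l, D (e.symm l).1 ^ q₁ := (hsum (fun j => D j ^ q₁)).symm
      _ ≤ C * ⨆ φ : ∀ i, {φ : X i →L[𝕜] 𝕜 // ‖φ‖ ≤ 1},
            ∑ l, (∏ i, ‖(φ i).1 (x (e.symm l).1 i)‖) ^ p₁ := h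
      _ = C * ⨆ φ : ∀ i, {φ : X i →L[𝕜] 𝕜 // ‖φ‖ ≤ 1},
            ∑ j, (k j : ℝ) * P φ j ^ p₁ := by
          congr 1
          exact iSup_congr fun φ => hsum (fun j => P φ j ^ p₁)
  -- boundedness of the sup families
  have bddP : ∀ (w : Fin m → ℝ) (r : ℝ), (∀ j, 0 ≤ w j) → 0 ≤ r →
      BddAbove (Set.range fun φ : ∀ i, {φ : X i →L[𝕜] 𝕜 // ‖φ‖ ≤ 1} =>
        ∑ j, w j * P φ j ^ r) := by
    intro w r hw hr
    refine ⟨∑ j, w j * M j ^ r, ?_⟩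
    rintro _ ⟨φ, rfl⟩
    exact Finset.sum_le_sum fun j _ =>
      mul_le_mul_of_nonneg_left (Real.rpow_le_rpow (hP0 φ j) (hPM φ j) hr) (hw j)
  -- Step 2: real weights
  have step2 : ∀ t : Fin m → ℝ, (∀ j, 0 ≤ t j) →
      ∑ j, t j * D j ^ q₁ ≤
        C * ⨆ φ : ∀ i, {φ : X i →L[𝕜] 𝕜 // ‖φ‖ ≤ 1}, ∑ j, t j * P φ j ^ p₁ := by
    intro t ht
    set G := ⨆ φ : ∀ i, {φ : X i →L[𝕜] 𝕜 // ‖φ‖ ≤ 1}, ∑ j, t j * P φ j ^ p₁ with hG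
    set K : ℝ := ∑ j, M j ^ p₁ with hK
    have hK0 : 0 ≤ K := Finset.sum_nonneg fun j _ => Real.rpow_nonneg (hM0 j) _
    have main : ∀ N : ℕ, 0 < (N:ℝ) → ∑ j, t j * D j ^ q₁ ≤ C * G + C * K / N := by
      intro N hN
      set k : Fin m → ℕ := fun j => ⌈(N:ℝ) * t j⌉₊ with hk
      have h1 := step1 k
      have hub : (⨆ φ : ∀ i, {φ : X i →L[𝕜] 𝕜 // ‖φ‖ ≤ 1},
          ∑ j, (k j : ℝ) * P φ j ^ p₁) ≤ N * G + K := by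
        refine ciSup_le fun φ => ?_
        have hterm : ∀ j, (k j : ℝ) * P φ j ^ p₁ ≤ (N * t j) * P φ j ^ p₁ + M j ^ p₁ := by
          intro j
          have hk1 : (k j : ℝ) ≤ (N:ℝ) * t j + 1 :=
            le_of_lt (Nat.ceil_lt_add_one (mul_nonneg hN.le (ht j)))
          have hPp : (0:ℝ) ≤ P φ j ^ p₁ := Real.rpow_nonneg (hP0 φ j) _
          have hPMp : P φ j ^ p₁ ≤ M j ^ p₁ :=
            Real.rpow_le_rpow (hP0 φ j) (hPM φ j) hp₁0.le
          nlinarith [mul_le_mul_of_nonneg_right hk1 hPp]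
        calc ∑ j, (k j : ℝ) * P φ j ^ p₁
            ≤ ∑ j, ((N * t j) * P φ j ^ p₁ + M j ^ p₁) :=
              Finset.sum_le_sum fun j _ => hterm j
          _ = (N:ℝ) * (∑ j, t j * P φ j ^ p₁) + K := by
              rw [Finset.sum_add_distrib, Finset.mul_sum]
              congr 1
              exact Finset.sum_congr rfl fun j _ => by ring
          _ ≤ (N:ℝ) * G + K := by
              have hle : (∑ j, t j * P φ j ^ p₁) ≤ G :=
                le_ciSup (bddP t p₁ ht hp₁0.le) φ
              have := mul_le_mul_of_nonneg_left hle hN.le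
              linarith
      have hlb : (N:ℝ) * ∑ j, t j * D j ^ q₁ ≤ ∑ j, (k j : ℝ) * D j ^ q₁ := by
        rw [Finset.mul_sum]
        refine Finset.sum_le_sum fun j _ => ?_
        have hcl : (N:ℝ) * t j ≤ (k j : ℝ) := Nat.le_ceil _
        have hD' : 0 ≤ D j ^ q₁ := Real.rpow_nonneg (hD0 j) _
        calc (N:ℝ) * (t j * D j ^ q₁) = ((N:ℝ) * t j) * D j ^ q₁ := by ring
          _ ≤ (k j : ℝ) * D j ^ q₁ := mul_le_mul_of_nonneg_right hcl hD'
      have hchain : (N:ℝ) * ∑ j, t j * D j ^ q₁ ≤ C * ((N:ℝ) * G + K) :=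
        le_trans hlb (le_trans h1 (mul_le_mul_of_nonneg_left hub hC0))
      have h2 : ∑ j, t j * D j ^ q₁ ≤ (C * ((N:ℝ) * G + K)) / N := by
        rw [le_div_iff₀ hN]
        nlinarith [hchain]
      calc ∑ j, t j * D j ^ q₁ ≤ (C * ((N:ℝ) * G + K)) / N := h2
        _ = C * G + C * K / N := by
            field_simp
    by_contra hcon
    push_neg at hcon
    set L := ∑ j, t j * D j ^ q₁ with hL
    have hδ : 0 < L - C * G := by linarith
    obtain ⟨N, hNgt⟩ := exists_nat_gt (C * K / (L - C * G))
    have hCK0 : 0 ≤ C * K := mul_nonneg hC0 hK0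
    have hN0 : 0 < (N:ℝ) := lt_of_le_of_lt (by positivity) hNgt
    have h3 := main N hN0
    have h4 : C * K / N < L - C * G := by
      rw [div_lt_iff₀ hN0]
      calc C * K = (C * K / (L - C * G)) * (L - C * G) := by field_simp
        _ < N * (L - C * G) := by
            exact mul_lt_mul_of_pos_right hNgt hδ
        _ = (L - C * G) * N := by ring
    linarith
  -- Main computation
  set S := ⨆ φ : ∀ i, {φ : X i →L[𝕜] 𝕜 // ‖φ‖ ≤ 1}, ∑ j, P φ j ^ p₂ with hS
  have hS0 : 0 ≤ S :=
    Real.iSup_nonneg fun φ => Finset.sum_nonneg fun j _ => Real.rpow_nonneg (hP0 φ j) _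
  have bddS : BddAbove (Set.range fun φ : ∀ i, {φ : X i →L[𝕜] 𝕜 // ‖φ‖ ≤ 1} =>
      ∑ j, P φ j ^ p₂) := by
    refine ⟨∑ j, M j ^ p₂, ?_⟩
    rintro _ ⟨φ, rfl⟩
    exact Finset.sum_le_sum fun j _ => Real.rpow_le_rpow (hP0 φ j) (hPM φ j) hp₂0.le
  set E := ∑ j, D j ^ q₂ with hE
  have hE0 : 0 ≤ E := Finset.sum_nonneg fun j _ => Real.rpow_nonneg (hD0 j) _
  show E ^ (1 / (q₂ * p₁ / (q₁ * p₂))) ≤ C ^ (p₂ / p₁) * S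
  have hαexp : 1 / (q₂ * p₁ / (q₁ * p₂)) = q₁ / q₂ * (p₂ / p₁) := by
    rw [one_div_div, div_mul_div_comm]
  rcases eq_or_lt_of_le hE0 with hE0' | hEpos
  · rw [← hE0', Real.zero_rpow]
    · exact mul_nonneg (Real.rpow_nonneg hC0 _) hS0
    · rw [hαexp]; positivity
  -- E > 0 case
  have hθ0 : (0:ℝ) < q₂ - q₁ := by linarith
  have huv : (q₂/(q₂-q₁)).HolderConjugate (q₂/q₁) := by
    rw [Real.holderConjugate_iff]; constructor
    · rw [lt_div_iff₀ hθ0]; linarith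
    · rw [inv_div, inv_div, ← add_div]
      field_simp
      ring
  have hW := step2 (fun j => D j ^ (q₂ - q₁)) (fun j => Real.rpow_nonneg (hD0 j) _)
  have hEW : ∑ j, D j ^ (q₂ - q₁) * D j ^ q₁ = E := by
    refine Finset.sum_congr rfl fun j _ => ?_
    rw [← Real.rpow_add_of_nonneg (hD0 j) hθ0.le hq₁0.le]
    congr 1
    ring
  set r : ℝ := p₁ * q₂ / (q₁ * p₂) with hr
  have hr1 : 1 ≤ r := by
    rw [hr, le_div_iff₀ (by positivity)]
    nlinarith
  -- pointwise bound for the sup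
  have hφbound : ∀ φ : ∀ i, {φ : X i →L[𝕜] 𝕜 // ‖φ‖ ≤ 1},
      ∑ j, D j ^ (q₂-q₁) * P φ j ^ p₁ ≤ E ^ (1 - q₁/q₂) * S ^ (p₁/p₂) := by
    intro φ
    have hHold := Real.inner_le_Lp_mul_Lq_of_nonneg (s := Finset.univ) huv
      (f := fun j => D j ^ (q₂-q₁)) (g := fun j => P φ j ^ p₁)
      (fun j _ => Real.rpow_nonneg (hD0 j) _) (fun j _ => Real.rpow_nonneg (hP0 φ j) _)
    have e1 : ∑ j, (D j ^ (q₂-q₁)) ^ (q₂/(q₂-q₁)) = E := by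
      refine Finset.sum_congr rfl fun j _ => ?_
      rw [← Real.rpow_mul (hD0 j)]
      congr 1
      field_simp
    have e2 : ∑ j, (P φ j ^ p₁) ^ (q₂/q₁) = ∑ j, (P φ j ^ p₂) ^ r := by
      refine Finset.sum_congr rfl fun j _ => ?_
      rw [← Real.rpow_mul (hP0 φ j), ← Real.rpow_mul (hP0 φ j)]
      congr 1
      rw [hr]
      field_simp
    have e3 : ∑ j, (P φ j ^ p₂) ^ r ≤ S ^ r := by
      calc ∑ j, (P φ j ^ p₂) ^ r ≤ (∑ j, P φ j ^ p₂) ^ r :=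
            aux_sum_rpow_le Finset.univ _ (fun j _ => Real.rpow_nonneg (hP0 φ j) _) hr1
        _ ≤ S ^ r := Real.rpow_le_rpow
            (Finset.sum_nonneg fun j _ => Real.rpow_nonneg (hP0 φ j) _)
            (le_ciSup bddS φ) (by linarith)
    have e4 : (∑ j, (P φ j ^ p₁) ^ (q₂/q₁)) ^ (1/(q₂/q₁)) ≤ S ^ (p₁/p₂) := by
      rw [e2]
      calc (∑ j, (P φ j ^ p₂) ^ r) ^ (1/(q₂/q₁))
          ≤ (S ^ r) ^ (1/(q₂/q₁)) := Real.rpow_le_rpow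
            (Finset.sum_nonneg fun j _ => Real.rpow_nonneg (Real.rpow_nonneg (hP0 φ j) _) _)
            e3 (by positivity)
        _ = S ^ (p₁/p₂) := by
            rw [← Real.rpow_mul hS0]
            congr 1
            rw [hr, one_div_div]
            field_simp
    calc ∑ j, D j ^ (q₂-q₁) * P φ j ^ p₁
        ≤ (∑ j, (D j ^ (q₂-q₁)) ^ (q₂/(q₂-q₁))) ^ (1/(q₂/(q₂-q₁))) *
          (∑ j, (P φ j ^ p₁) ^ (q₂/q₁)) ^ (1/(q₂/q₁)) := hHold
      _ ≤ E ^ (1 - q₁/q₂) * S ^ (p₁/p₂) := by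
          rw [e1]
          have heq : (1:ℝ)/(q₂/(q₂-q₁)) = 1 - q₁/q₂ := by
            rw [one_div_div]
            field_simp
          rw [heq]
          exact mul_le_mul_of_nonneg_left e4 (Real.rpow_nonneg hE0 _)
  have hmain : E ≤ C * (E ^ (1 - q₁/q₂) * S ^ (p₁/p₂)) := by
    calc E = ∑ j, D j ^ (q₂-q₁) * D j ^ q₁ := hEW.symm
      _ ≤ C * ⨆ φ : ∀ i, {φ : X i →L[𝕜] 𝕜 // ‖φ‖ ≤ 1},
            ∑ j, D j ^ (q₂-q₁) * P φ j ^ p₁ := hW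
      _ ≤ C * (E ^ (1 - q₁/q₂) * S ^ (p₁/p₂)) :=
          mul_le_mul_of_nonneg_left (ciSup_le hφbound) hC0
  have hfac : (0:ℝ) < E ^ (1 - q₁/q₂) := Real.rpow_pos_of_pos hEpos _
  have hEq : E ^ (q₁/q₂) ≤ C * S ^ (p₁/p₂) := by
    have h' : E ^ (q₁/q₂) * E ^ (1 - q₁/q₂) ≤ (C * S ^ (p₁/p₂)) * E ^ (1 - q₁/q₂) := by
      rw [← Real.rpow_add hEpos, show q₁/q₂ + (1 - q₁/q₂) = 1 by ring, Real.rpow_one]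
      calc E ≤ C * (E ^ (1 - q₁/q₂) * S ^ (p₁/p₂)) := hmain
        _ = C * S ^ (p₁/p₂) * E ^ (1 - q₁/q₂) := by ring
    exact le_of_mul_le_mul_right h' hfac
  have hfin := Real.rpow_le_rpow (Real.rpow_nonneg hE0 _) hEq
    (le_of_lt (by positivity : (0:ℝ) < p₂/p₁))
  rw [← Real.rpow_mul hE0, Real.mul_rpow hC0 (Real.rpow_nonneg hS0 _),
    ← Real.rpow_mul hS0, show p₁/p₂ * (p₂/p₁) = 1 by field_simp, Real.rpow_one] at hfin
  rw [hαexp]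
  exact hfin
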